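/- Let α ∈ [0,1/4), T > 0 and L ≥ 0. Let F : X → X be a function with F(X) ⊆ H_α which is H_α-Lipschitz with constant L, i.e. ‖Q^{-α}(F(x+h)) − Q^{-α}(F(x))‖ ≤ L·‖Q^{-α}h‖ for every x ∈ X and h ∈ H_α. Then for every x ∈ X the (upper Lebesgue) integral of the nonnegative function s ↦ ‖Q^{-α}(F(e^{sA}x))‖² over [0,T] is finite: ∫₀^T ‖Q^{-α}(F(e^{sA}x))‖² ds < ∞. -/

import Mathlib

/-!
Context: as before; `Q^α` is the unique bounded operator `Qα` with
`Qα (e i) = (q i)^α • e i`, injective (`hinj`), so on `H_α = range Qα` the preimage map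
`Q^{-α} = Function.invFun ⇑Qα` is the genuine inverse; `e^{sA}` is the unique family `S`
with `S 0 = Id` and `S s (e i) = exp(−(s/2)(q i)^{2α−1}) • e i` for `s > 0`.

STATEMENT 7: let `α ∈ [0,1/4)`, `T > 0`, `L ≥ 0`, and `F : X → X` with `F(X) ⊆ H_α`
which is `H_α`-Lipschitz with constant `L`, i.e.
`‖Q^{-α}(F(x+h)) − Q^{-α}(F x)‖ ≤ L‖Q^{-α}h‖` for all `x ∈ X`, `h = Qα u ∈ H_α`.
Then for every `x ∈ X` the upper Lebesgue integral of `s ↦ ‖Q^{-α}(F(e^{sA}x))‖²` over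
`(0,T]` is finite.
-/

open scoped RealInnerProductSpace ENNReal
open MeasureTheory

noncomputable section

/-- For `0 ≤ γ ≤ 1`, `c > 0`, `t > 0` we have `t^γ e^{-ct} ≤ c^{-γ}`. -/
private lemma rpow_mul_exp_le {γ c t : ℝ} (hγ0 : 0 ≤ γ) (hγ1 : γ ≤ 1)
    (hc : 0 < c) (ht : 0 < t) :
    t ^ γ * Real.exp (-(c * t)) ≤ c ^ (-γ) := by
  have hct : 0 < c * t := mul_pos hc ht
  have h1 : (c * t) ^ γ ≤ 1 + c * t := by
    rcases le_total (c * t) 1 with h | h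
    · have := Real.rpow_le_one hct.le h hγ0
      linarith
    · have h2 : (c * t) ^ γ ≤ (c * t) ^ (1 : ℝ) :=
        Real.rpow_le_rpow_of_exponent_le h hγ1
      rw [Real.rpow_one] at h2
      linarith
  have hexp : 0 < Real.exp (-(c * t)) := Real.exp_pos _
  have h2 : (c * t) ^ γ * Real.exp (-(c * t)) ≤ 1 := by
    have hle : 1 + c * t ≤ Real.exp (c * t) := by
      linarith [Real.add_one_le_exp (c * t)]
    calc (c * t) ^ γ * Real.exp (-(c * t))
        ≤ (1 + c * t) * Real.exp (-(c * t)) :=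
          mul_le_mul_of_nonneg_right h1 hexp.le
      _ ≤ Real.exp (c * t) * Real.exp (-(c * t)) :=
          mul_le_mul_of_nonneg_right hle hexp.le
      _ = 1 := by rw [← Real.exp_add]; simp
  have key : t ^ γ = c ^ (-γ) * (c * t) ^ γ := by
    rw [Real.mul_rpow hc.le ht.le, ← mul_assoc, ← Real.rpow_add hc, neg_add_cancel,
      Real.rpow_zero, one_mul]
  calc t ^ γ * Real.exp (-(c * t))
      = c ^ (-γ) * ((c * t) ^ γ * Real.exp (-(c * t))) := by rw [key]; ring
    _ ≤ c ^ (-γ) * 1 := mul_le_mul_of_nonneg_left h2 (Real.rpow_nonneg hc.le _)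
    _ = c ^ (-γ) := mul_one _

/-- Coordinates of a diagonal operator with respect to a Hilbert basis. -/
private lemma diag_repr {X : Type*} [NormedAddCommGroup X] [InnerProductSpace ℝ X]
    {ι : Type*} (e : HilbertBasis ι ℝ X) (B : X →L[ℝ] X) (d : ι → ℝ)
    (hB : ∀ i, B (e i) = d i • e i) (y : X) (i : ι) :
    e.repr (B y) i = d i * e.repr y i := by
  classical
  have h1 := (e.hasSum_repr y).mapL B
  have h2 := h1.mapL (innerSL ℝ (e i))
  have horth := orthonormal_iff_ite.mp e.orthonormal
  have hfun : (fun j => (innerSL ℝ (e i)) (B (e.repr y j • e j)))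
      = fun j => if j = i then d i * e.repr y i else 0 := by
    funext j
    rw [ContinuousLinearMap.map_smul, hB j]
    simp only [innerSL_apply_apply, real_inner_smul_right, smul_eq_mul]
    rw [horth i j]
    by_cases h : j = i
    · subst h
      rw [HilbertBasis.repr_apply_apply]
      simp [mul_comm]
    · simp [h, Ne.symm h]
  rw [hfun] at h2
  have h3 := hasSum_ite_eq i (d i * e.repr y i)
  have h4 : (innerSL ℝ (e i)) (B y) = d i * e.repr y i := h2.unique h3
  rw [HilbertBasis.repr_apply_apply]
  simpa using h4

/-- Measurability of a real power function. -/
private lemma meas_rpow_const (c : ℝ) : Measurable fun s : ℝ => s ^ c := by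
  apply measurable_of_continuousOn_compl_singleton (0 : ℝ)
  intro z hz
  have hz' : z ≠ 0 := by simpa using hz
  exact (Real.continuousAt_rpow_const z c (Or.inl hz')).continuousWithinAt

theorem stmt_7
    {X : Type*} [NormedAddCommGroup X] [InnerProductSpace ℝ X] [CompleteSpace X]
    [TopologicalSpace.SeparableSpace X]
    {ι : Type*} (e : HilbertBasis ι ℝ X) (q : ι → ℝ) (Q : X →L[ℝ] X)
    (hq : ∀ i, 0 < q i)
    (hdiag : ∀ i, Q (e i) = q i • e i)
    (hsa : IsSelfAdjoint Q)
    (hpos : ∀ x : X, x ≠ 0 → 0 < ⟪Q x, x⟫)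
    (hcomp : IsCompactOperator Q)
    (htrace : Summable fun i => ⟪Q (e i), e i⟫)
    {α : ℝ} (hα : α ∈ Set.Ico (0 : ℝ) (1/4))
    (Qα : X →L[ℝ] X) (hQα : ∀ i, Qα (e i) = (q i) ^ α • e i)
    (hinj : Function.Injective Qα)
    (S : ℝ → X →L[ℝ] X)
    (hS0 : S 0 = ContinuousLinearMap.id ℝ X)
    (hSdiag : ∀ s > (0 : ℝ), ∀ i,
      S s (e i) = Real.exp (-(s/2) * (q i) ^ (2*α - 1)) • e i)
    {T : ℝ} (hT : 0 < T) {L : ℝ} (hL : 0 ≤ L)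
    (F : X → X)
    (hFrange : ∀ x : X, F x ∈ Set.range ⇑Qα)
    (hFlip : ∀ x u : X,
      ‖Function.invFun ⇑Qα (F (x + Qα u)) - Function.invFun ⇑Qα (F x)‖ ≤ L * ‖u‖) :
    ∀ x : X,
      ∫⁻ s in Set.Ioc (0 : ℝ) T,
        ENNReal.ofReal (‖Function.invFun ⇑Qα (F (S s x))‖ ^ 2) < ⊤ := by
  intro x
  obtain ⟨hα0, hα4⟩ := hα
  have h12 : 0 < 1 - 2*α := by linarith
  set γ : ℝ := α / (1 - 2*α) with hγdef
  have hγ0 : 0 ≤ γ := div_nonneg hα0 h12.le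
  have hγ1 : γ ≤ 1 := by
    rw [hγdef, div_le_one h12]; linarith
  have h2γ : 2*γ < 1 := by
    rw [hγdef, mul_div_assoc', div_lt_one h12]; linarith
  have hne : (1:ℝ) - 2*α ≠ 0 := ne_of_gt h12
  have hexpγ : (2*α - 1) * γ = -α := by
    rw [hγdef]; field_simp; ring
  set a : ℝ := ‖Function.invFun ⇑Qα (F 0)‖ with hadef
  set b : ℝ := L * ‖x‖ with hbdef
  have ha0 : 0 ≤ a := norm_nonneg _
  have hb0 : 0 ≤ b := mul_nonneg hL (norm_nonneg _)
  have p2pos : (0:ℝ) < ((2:ℝ≥0∞)).toReal := by norm_num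
  have h2N : ((2:ℝ≥0∞)).toReal = ((2:ℕ):ℝ) := by norm_num
  -- key pointwise bound on `(0,T)`
  have key : ∀ s ∈ Set.Ioo (0:ℝ) T,
      ‖Function.invFun ⇑Qα (F (S s x))‖ ≤ a + b * (s/2) ^ (-γ) := by
    intro s hs
    have hs0 : 0 < s := hs.1
    have hs2 : 0 < s/2 := by linarith
    set M : ℝ := (s/2) ^ (-γ) with hMdef
    have hM0 : 0 ≤ M := Real.rpow_nonneg hs2.le _
    set c : ι → ℝ := fun i => Real.exp (-(s/2) * q i ^ (2*α - 1)) * (q i) ^ (-α) with hcdef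
    have hc0 : ∀ i, 0 ≤ c i := fun i =>
      mul_nonneg (Real.exp_pos _).le (Real.rpow_nonneg (hq i).le _)
    have hcM : ∀ i, c i ≤ M := by
      intro i
      have ht : 0 < q i ^ (2*α - 1) := Real.rpow_pos_of_pos (hq i) _
      have hqγ : (q i ^ (2*α - 1)) ^ γ = (q i) ^ (-α : ℝ) := by
        rw [← Real.rpow_mul (hq i).le, hexpγ]
      have hrw : c i = (q i ^ (2*α - 1)) ^ γ
          * Real.exp (-((s/2) * q i ^ (2*α - 1))) := by
        simp only [hcdef]
        rw [hqγ, neg_mul]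
        ring
      rw [hrw, hMdef]
      exact rpow_mul_exp_le hγ0 hγ1 hs2 ht
    -- the preimage of `S s x` under `Qα`
    set f : ι → ℝ := fun i => c i * e.repr x i with hfdef
    have hfb : ∀ i, ‖f i‖ ≤ M * ‖e.repr x i‖ := by
      intro i
      have h1 : ‖f i‖ = c i * ‖e.repr x i‖ := by
        simp only [hfdef]
        rw [norm_mul, Real.norm_eq_abs (c i), abs_of_nonneg (hc0 i)]
      rw [h1]
      exact mul_le_mul_of_nonneg_right (hcM i) (norm_nonneg _)
    have hf2 : Memℓp f 2 := by
      apply memℓp_gen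
      refine Summable.of_nonneg_of_le (fun i => ?_) (fun i => ?_)
        (((lp.memℓp (e.repr x)).summable p2pos).mul_left
          (M ^ ((2:ℝ≥0∞)).toReal))
      · positivity
      · calc ‖f i‖ ^ ((2:ℝ≥0∞)).toReal
            ≤ (M * ‖e.repr x i‖) ^ ((2:ℝ≥0∞)).toReal :=
              Real.rpow_le_rpow (norm_nonneg _) (hfb i) p2pos.le
          _ = M ^ ((2:ℝ≥0∞)).toReal * ‖e.repr x i‖ ^ ((2:ℝ≥0∞)).toReal :=
              Real.mul_rpow hM0 (norm_nonneg _)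
    set u : X := e.repr.symm (⟨f, hf2⟩ : lp (fun _ : ι => ℝ) 2) with hudef
    have hrepru : e.repr u = (⟨f, hf2⟩ : lp (fun _ : ι => ℝ) 2) := by
      rw [hudef]; exact e.repr.apply_symm_apply _
    have hui : ∀ i, e.repr u i = f i := by
      intro i; rw [hrepru]
    -- `Qα u = S s x`
    have hQαu : Qα u = S s x := by
      apply e.repr.injective
      apply lp.ext
      funext i
      show e.repr (Qα u) i = e.repr (S s x) i
      rw [diag_repr e Qα _ hQα u i, diag_repr e (S s) _ (hSdiag s hs0) x i, hui i]
      have hq1 : (q i) ^ α * (q i) ^ (-α : ℝ) = 1 := by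
        rw [← Real.rpow_add (hq i), add_neg_cancel, Real.rpow_zero]
      calc (q i) ^ α * f i
          = ((q i) ^ α * (q i) ^ (-α : ℝ))
            * (Real.exp (-(s/2) * q i ^ (2*α - 1)) * e.repr x i) := by
            simp only [hfdef, hcdef]; ring
        _ = Real.exp (-(s/2) * q i ^ (2*α - 1)) * e.repr x i := by
            rw [hq1, one_mul]
    -- norm bound on `u`
    have hnu : ‖u‖ = ‖(⟨f, hf2⟩ : lp (fun _ : ι => ℝ) 2)‖ := by
      rw [hudef]; exact LinearIsometryEquiv.norm_map e.repr.symm _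
    have htsum : ‖(⟨f, hf2⟩ : lp (fun _ : ι => ℝ) 2)‖ ^ ((2:ℝ≥0∞)).toReal
        ≤ (M * ‖x‖) ^ ((2:ℝ≥0∞)).toReal := by
      rw [lp.norm_rpow_eq_tsum p2pos, Real.mul_rpow hM0 (norm_nonneg x),
        ← LinearIsometryEquiv.norm_map e.repr x, lp.norm_rpow_eq_tsum p2pos (e.repr x),
        ← tsum_mul_left]
      refine Summable.tsum_le_tsum (fun i => ?_)
        ((lp.memℓp (⟨f, hf2⟩ : lp (fun _ : ι => ℝ) 2)).summable p2pos)
        (((lp.memℓp (e.repr x)).summable p2pos).mul_left _)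
      calc ‖f i‖ ^ ((2:ℝ≥0∞)).toReal
          ≤ (M * ‖e.repr x i‖) ^ ((2:ℝ≥0∞)).toReal :=
            Real.rpow_le_rpow (norm_nonneg _) (hfb i) p2pos.le
        _ = M ^ ((2:ℝ≥0∞)).toReal * ‖e.repr x i‖ ^ ((2:ℝ≥0∞)).toReal :=
            Real.mul_rpow hM0 (norm_nonneg _)
    rw [h2N, Real.rpow_natCast, Real.rpow_natCast] at htsum
    have hfin : ‖u‖ ^ (2:ℕ) ≤ (M * ‖x‖) ^ (2:ℕ) := by
      rw [hnu]; exact htsum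
    have hnormu : ‖u‖ ≤ M * ‖x‖ :=
      le_of_pow_le_pow_left₀ two_ne_zero (by positivity) hfin
    -- Lipschitz bound
    have hFb := hFlip 0 u
    rw [zero_add, hQαu] at hFb
    have htri := norm_sub_norm_le (Function.invFun ⇑Qα (F (S s x)))
      (Function.invFun ⇑Qα (F 0))
    have hLu : L * ‖u‖ ≤ L * (M * ‖x‖) := mul_le_mul_of_nonneg_left hnormu hL
    have hbM : L * (M * ‖x‖) = b * M := by rw [hbdef]; ring
    rw [hbM] at hLu
    rw [← hadef] at htri
    linarith
  -- conclude: compare with an integrable function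
  have hIoo : (volume : Measure ℝ).restrict (Set.Ioc (0:ℝ) T)
      = (volume : Measure ℝ).restrict (Set.Ioo (0:ℝ) T) :=
    (Measure.restrict_congr_set Ioo_ae_eq_Ioc).symm
  rw [hIoo]
  set C1 : ℝ := 2*a^2 with hC1
  set C2 : ℝ := 2*b^2 * (2:ℝ)^(2*γ) with hC2
  have hC20 : 0 ≤ C2 := by
    rw [hC2]; positivity
  set g : ℝ → ℝ := fun s => C1 + C2 * s ^ (-(2*γ)) with hgdef
  have hgm : Measurable fun s => ENNReal.ofReal (g s) := by
    apply Measurable.ennreal_ofReal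
    simp only [hgdef]
    exact measurable_const.add ((meas_rpow_const (-(2*γ))).const_mul C2)
  have hle : ∀ s ∈ Set.Ioo (0:ℝ) T,
      ENNReal.ofReal (‖Function.invFun ⇑Qα (F (S s x))‖ ^ 2)
        ≤ ENNReal.ofReal (g s) := by
    intro s hs
    apply ENNReal.ofReal_le_ofReal
    have hk := key s hs
    have hs0 : 0 < s := hs.1
    have hs2 : 0 < s/2 := by linarith
    have h1 : ‖Function.invFun ⇑Qα (F (S s x))‖ ^ 2 ≤ (a + b * (s/2) ^ (-γ)) ^ 2 :=
      pow_le_pow_left₀ (norm_nonneg _) hk 2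
    have hr0 : 0 ≤ (s/2 : ℝ) ^ (-γ) := Real.rpow_nonneg hs2.le _
    have e1 : ((s/2 : ℝ) ^ (-γ)) ^ (2:ℕ) = (s/2 : ℝ) ^ (-(2*γ)) := by
      rw [← Real.rpow_natCast ((s/2 : ℝ) ^ (-γ)) 2, ← Real.rpow_mul hs2.le]
      congr 1
      push_cast
      ring
    have e2 : ((s/2 : ℝ)) ^ (-(2*γ)) = (2:ℝ)^(2*γ) * s ^ (-(2*γ)) := by
      rw [Real.div_rpow hs0.le (by norm_num : (0:ℝ) ≤ 2), div_eq_mul_inv,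
        ← Real.rpow_neg (by norm_num : (0:ℝ) ≤ 2), neg_neg]
      ring
    have h2' : (a + b * (s/2) ^ (-γ)) ^ 2 ≤ C1 + C2 * s ^ (-(2*γ)) := by
      have hsq := sq_nonneg (a - b * (s/2) ^ (-γ))
      have h3 : (a + b * (s/2) ^ (-γ)) ^ 2
          ≤ 2*a^2 + 2*(b * (s/2) ^ (-γ))^2 := by nlinarith
      calc (a + b * (s/2) ^ (-γ)) ^ 2
          ≤ 2*a^2 + 2*(b * (s/2) ^ (-γ))^2 := h3
        _ = C1 + C2 * s ^ (-(2*γ)) := by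
            rw [hC1, hC2, mul_pow, e1, e2]; ring
    simp only [hgdef]
    linarith
  refine lt_of_le_of_lt (setLIntegral_mono hgm hle) ?_
  have hint : IntegrableOn g (Set.Ioo (0:ℝ) T) := by
    rw [hgdef]
    apply Integrable.add
    · exact integrableOn_const measure_Ioo_lt_top.ne
    · exact ((intervalIntegral.integrableOn_Ioo_rpow_iff hT).2 (by linarith)).const_mul C2
  exact hint.lintegral_lt_top
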